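/- The row-swapping involution σ_i on fermionic multiline queues is an involution: σ_i(σ_i(Q)) = Q for every fermionic multiline queue Q = (Q_1,...,Q_k) with k ≥ 2 rows and every 1 ≤ i < k. -/

import Mathlib

/-- Linear bracket-matching pass.  Tokens are `(site, isOpen)`.  The second argument is the
stack of currently unmatched open brackets (most recent first), the third accumulates the
linearly unmatched closed brackets (most recent first). -/
def pairProcess {α : Type} : List (α × Bool) → List α → List α → List α × List α
  | [], opens, closes => (opens, closes)
  | (a, true) :: ts, opens, closes => pairProcess ts (a :: opens) closes
  | (a, false) :: ts, [], closes => pairProcess ts [] (a :: closes)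
  | (_, false) :: ts, _ :: opens, closes => pairProcess ts opens closes

/-- The token list of `Par(A,B)`: scanning sites `j = 1, …, n` in order, record an open
bracket for `j ∈ B` (the row above) and then a closed bracket for `j ∈ A` (the row below). -/
def parTokens {n : ℕ} (A B : Finset (Fin n)) : List (Fin n × Bool) :=
  (List.finRange n).flatMap
    (fun j => (if j ∈ B then [(j, true)] else []) ++ (if j ∈ A then [(j, false)] else []))

/-- Result of the linear pass on `Par(A,B)`. -/
def parRes {n : ℕ} (A B : Finset (Fin n)) : List (Fin n) × List (Fin n) :=
  pairProcess (parTokens A B) [] []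

/-- The set of cylindrically unpaired particles of `B` (open brackets) in `Par(A,B)`:
after the linear pass, the cyclic rule additionally matches `min` many remaining opens
and closes, leaving the earliest surplus opens unmatched. -/
def unmatchedOpen {n : ℕ} (A B : Finset (Fin n)) : Finset (Fin n) :=
  ((parRes A B).1.drop (parRes A B).2.length).toFinset

/-- The set of cylindrically unpaired particles of `A` (closed brackets) in `Par(A,B)`. -/
def unmatchedClose {n : ℕ} (A B : Finset (Fin n)) : Finset (Fin n) :=
  ((parRes A B).2.take ((parRes A B).2.length - (parRes A B).1.length)).toFinset

/-- The row-swapping involution on a pair of rows `(A, B)` (`A` below, `B` above):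
all cylindrically unmatched entries of `Par(A,B)` are exchanged between the two rows. -/
def sigmaPair {n : ℕ} (A B : Finset (Fin n)) : Finset (Fin n) × Finset (Fin n) :=
  ((A \ unmatchedClose A B) ∪ unmatchedOpen A B,
   (B \ unmatchedOpen A B) ∪ unmatchedClose A B)

/-- The involution `σ_i` acting on rows `i` and `i+1` of a multiline queue. -/
def sigmaRow {n : ℕ} (i : ℕ) (Q : ℕ → Finset (Fin n)) : ℕ → Finset (Fin n) :=
  fun j =>
    if j = i then (sigmaPair (Q i) (Q (i + 1))).1
    else if j = i + 1 then (sigmaPair (Q i) (Q (i + 1))).2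
    else Q j

namespace MLQaux

variable {α : Type}

lemma pairProcess_append (w₁ w₂ : List (α × Bool)) (s cl : List α) :
    pairProcess (w₁ ++ w₂) s cl =
      pairProcess w₂ (pairProcess w₁ s cl).1 (pairProcess w₁ s cl).2 := by
  induction w₁ generalizing s cl with
  | nil => simp [pairProcess]
  | cons t ts ih =>
    obtain ⟨a, b⟩ := t
    cases b
    · cases s with
      | nil => simp [pairProcess, ih]
      | cons x xs => simp [pairProcess, ih]
    · simp [pairProcess, ih]

inductive Bal : List (α × Bool) → Prop
  | nil : Bal []
  | wrap (a b : α) {v w : List (α × Bool)} : Bal v → Bal w →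
      Bal ((a, true) :: v ++ (b, false) :: w)

inductive Opens : List (α × Bool) → List α → Prop
  | nil : Opens [] []
  | cons (a : α) {v w : List (α × Bool)} {O : List α} : Bal v → Opens w O →
      Opens ((a, true) :: v ++ w) (O ++ [a])

inductive Closes : List (α × Bool) → List α → Prop
  | bal {v : List (α × Bool)} : Bal v → Closes v []
  | cons (a : α) {v w : List (α × Bool)} {C : List α} : Bal v → Closes w C →
      Closes (v ++ (a, false) :: w) (C ++ [a])

lemma Bal.run {v : List (α × Bool)} (h : Bal v) :
    ∀ s cl, pairProcess v s cl = (s, cl) := by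
  induction h with
  | nil => intro s cl; rfl
  | wrap a b hv hw ihv ihw =>
    intro s cl
    simp [pairProcess, pairProcess_append, ihv, ihw]

lemma Bal.append {v w : List (α × Bool)} (hv : Bal v) (hw : Bal w) : Bal (v ++ w) := by
  induction hv with
  | nil => simpa using hw
  | wrap a b h1 h2 ih1 ih2 =>
    have := Bal.wrap a b h1 ih2
    simpa using this

lemma Opens.run {w : List (α × Bool)} {O : List α} (h : Opens w O) :
    ∀ s cl, pairProcess w s cl = (O ++ s, cl) := by
  induction h with
  | nil => intro s cl; rfl
  | cons a hv hw ih =>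
    intro s cl
    simp [pairProcess, pairProcess_append, hv.run, ih]

lemma Closes.run {w : List (α × Bool)} {C : List α} (h : Closes w C) :
    ∀ cl, pairProcess w [] cl = ([], C ++ cl) := by
  induction h with
  | bal hv => intro cl; simp [hv.run]
  | cons a hv hw ih =>
    intro cl
    simp [pairProcess, pairProcess_append, hv.run, ih]

end MLQaux
namespace MLQaux
variable {α : Type}

lemma Opens.mem {w : List (α × Bool)} {O : List α} (h : Opens w O) :
    ∀ b ∈ O, (b, true) ∈ w := by
  induction h with
  | nil => simp
  | cons a hv hw ih =>
    intro b hb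
    simp only [List.mem_append, List.mem_singleton] at hb
    rcases hb with hb | rfl
    · simp [ih b hb]
    · simp

lemma Closes.mem {w : List (α × Bool)} {C : List α} (h : Closes w C) :
    ∀ b ∈ C, (b, false) ∈ w := by
  induction h with
  | bal hv => simp
  | cons a hv hw ih =>
    intro b hb
    simp only [List.mem_append, List.mem_singleton] at hb
    rcases hb with hb | rfl
    · simp [ih b hb]
    · simp

lemma Opens.nil_eq' {w : List (α × Bool)} {O : List α} (h : Opens w O) (hO : O = []) :
    w = [] := by
  induction h with
  | nil => rfl
  | cons a hv hw ih => simp at hO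

lemma Opens.nil_eq {w : List (α × Bool)} (h : Opens w []) : w = [] := h.nil_eq' rfl

lemma Opens.snoc {w : List (α × Bool)} {O : List α} (h : Opens w O) (a : α) :
    Opens (w ++ [(a, true)]) (a :: O) := by
  induction h with
  | nil =>
    have := Opens.cons (v := []) (w := []) (O := []) a Bal.nil Opens.nil
    simpa using this
  | cons b hv hw ih =>
    have := Opens.cons (a := b) hv ih
    simpa using this

lemma Closes.snoc {w : List (α × Bool)} {C : List α} (h : Closes w C) (a : α) :
    Closes (w ++ [(a, false)]) (a :: C) := by
  induction h with
  | bal hv =>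
    have := Closes.cons (w := []) (C := []) a hv (Closes.bal Bal.nil)
    simpa using this
  | cons b hv hw ih =>
    have := Closes.cons (a := b) hv ih
    simpa using this

lemma Closes.append_bal {w v : List (α × Bool)} {C : List α} (h : Closes w C) (hv : Bal v) :
    Closes (w ++ v) C := by
  induction h with
  | bal hu => exact Closes.bal (hu.append hv)
  | cons b hu hw ih =>
    have := Closes.cons (a := b) hu ih
    simpa using this

lemma Opens.pop {w : List (α × Bool)} {O : List α} (h : Opens w O) (c : α) (hO : O ≠ []) :
    (O.tail = [] ∧ Bal (w ++ [(c, false)])) ∨ Opens (w ++ [(c, false)]) O.tail := by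
  induction h with
  | nil => simp at hO
  | cons a hv hw ih =>
    rename_i v w' O'
    rcases eq_or_ne O' [] with rfl | hO'
    · left
      have hw' : w' = [] := hw.nil_eq
      subst hw'
      constructor
      · simp
      · have := Bal.wrap a c hv (Bal.nil (α := α))
        simpa using this
    · have htail : (O' ++ [a]).tail = O'.tail ++ [a] := by
        cases O' with
        | nil => simp at hO'
        | cons x xs => simp
      rcases ih hO' with ⟨h1, hbal⟩ | h2
      · right
        rw [htail, h1]
        have hb : Bal (v ++ (w' ++ [(c, false)])) := hv.append hbal
        have := Opens.cons (v := v ++ (w' ++ [(c, false)])) (w := []) (O := []) a hb Opens.nil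
        simpa using this
      · right
        rw [htail]
        have := Opens.cons (a := a) hv h2
        simpa using this

lemma exists_decomp (w : List (α × Bool)) :
    ∃ w₁ w₂ C O, w = w₁ ++ w₂ ∧ Closes w₁ C ∧ Opens w₂ O := by
  induction w using List.reverseRecOn with
  | nil => exact ⟨[], [], [], [], rfl, Closes.bal Bal.nil, Opens.nil⟩
  | append_singleton ws t ih =>
    obtain ⟨w₁, w₂, C, O, rfl, hC, hO⟩ := ih
    obtain ⟨a, b⟩ := t
    cases b
    · rcases eq_or_ne O [] with rfl | h
      · have hw2 : w₂ = [] := hO.nil_eq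
        subst hw2
        exact ⟨w₁ ++ [(a, false)], [], a :: C, [], by simp, hC.snoc a, Opens.nil⟩
      · rcases hO.pop a h with ⟨ht, hbal⟩ | h2
        · exact ⟨w₁ ++ (w₂ ++ [(a, false)]), [], C, [], by simp, hC.append_bal hbal, Opens.nil⟩
        · exact ⟨w₁, w₂ ++ [(a, false)], C, O.tail, by simp, hC, h2⟩
    · exact ⟨w₁, w₂ ++ [(a, true)], C, a :: O, by simp, hC, hO.snoc a⟩

lemma decomp_run {w₁ w₂ : List (α × Bool)} {C O : List α}
    (hC : Closes w₁ C) (hO : Opens w₂ O) :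
    pairProcess (w₁ ++ w₂) [] [] = (O, C) := by
  rw [pairProcess_append, hC.run]
  simp [hO.run]

end MLQaux
namespace MLQaux
variable {α : Type}

def opensites (w : List (α × Bool)) : List α :=
  w.filterMap (fun t => if t.2 then some t.1 else none)

def closesites (w : List (α × Bool)) : List α :=
  w.filterMap (fun t => if t.2 then none else some t.1)

@[simp] lemma opensites_nil : opensites ([] : List (α × Bool)) = [] := rfl
@[simp] lemma closesites_nil : closesites ([] : List (α × Bool)) = [] := rfl

@[simp] lemma opensites_append (w₁ w₂ : List (α × Bool)) :
    opensites (w₁ ++ w₂) = opensites w₁ ++ opensites w₂ := List.filterMap_append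

@[simp] lemma closesites_append (w₁ w₂ : List (α × Bool)) :
    closesites (w₁ ++ w₂) = closesites w₁ ++ closesites w₂ := List.filterMap_append

@[simp] lemma opensites_cons_true (a : α) (w : List (α × Bool)) :
    opensites ((a, true) :: w) = a :: opensites w := by simp [opensites, List.filterMap_cons]

@[simp] lemma opensites_cons_false (a : α) (w : List (α × Bool)) :
    opensites ((a, false) :: w) = opensites w := by simp [opensites, List.filterMap_cons]

@[simp] lemma closesites_cons_true (a : α) (w : List (α × Bool)) :
    closesites ((a, true) :: w) = closesites w := by simp [closesites, List.filterMap_cons]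

@[simp] lemma closesites_cons_false (a : α) (w : List (α × Bool)) :
    closesites ((a, false) :: w) = a :: closesites w := by simp [closesites, List.filterMap_cons]

lemma mem_opensites {w : List (α × Bool)} {x : α} : x ∈ opensites w ↔ (x, true) ∈ w := by
  simp only [opensites, List.mem_filterMap]
  constructor
  · rintro ⟨⟨a, b⟩, hm, h⟩
    cases b <;> simp_all
  · intro h; exact ⟨(x, true), h, rfl⟩

lemma mem_closesites {w : List (α × Bool)} {x : α} : x ∈ closesites w ↔ (x, false) ∈ w := by
  simp only [closesites, List.mem_filterMap]
  constructor
  · rintro ⟨⟨a, b⟩, hm, h⟩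
    cases b <;> simp_all
  · intro h; exact ⟨(x, false), h, rfl⟩

variable [DecidableEq α]

def mapFlip (S : Finset α) (w : List (α × Bool)) : List (α × Bool) :=
  w.map (fun t => if t.1 ∈ S then (t.1, !t.2) else t)

@[simp] lemma mapFlip_nil (S : Finset α) : mapFlip S ([] : List (α × Bool)) = [] := rfl

@[simp] lemma mapFlip_append (S : Finset α) (w₁ w₂ : List (α × Bool)) :
    mapFlip S (w₁ ++ w₂) = mapFlip S w₁ ++ mapFlip S w₂ := List.map_append

@[simp] lemma mapFlip_cons (S : Finset α) (t : α × Bool) (w : List (α × Bool)) :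
    mapFlip S (t :: w) = (if t.1 ∈ S then (t.1, !t.2) else t) :: mapFlip S w := rfl

lemma mapFlip_eq_self {S : Finset α} {w : List (α × Bool)} (h : ∀ t ∈ w, t.1 ∉ S) :
    mapFlip S w = w := by
  unfold mapFlip
  conv_rhs => rw [← List.map_id w]
  exact List.map_congr_left (fun t ht => by simp [h t ht])

lemma flip_opens {w : List (α × Bool)} {O : List α} (h : Opens w O) :
    ∀ (O₁ D : List α) (S : Finset α), O = O₁ ++ D →
    (∀ x ∈ D, x ∈ S) →
    (∀ t ∈ w, t.1 ∈ S → t.2 = true ∧ t.1 ∈ D) →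
    (opensites w).Nodup →
    ∀ cl, pairProcess (mapFlip S w) [] cl = (O₁, D ++ cl) := by
  induction h with
  | nil =>
    intro O₁ D S hOD hDS hC1 hnd cl
    obtain ⟨rfl, rfl⟩ := List.append_eq_nil_iff.mp hOD.symm
    simp [pairProcess]
  | cons a hv hw ih =>
    rename_i v w' O'
    intro O₁ D S hOD hDS hC1 hnd cl
    rcases D.eq_nil_or_concat with rfl | ⟨D', d, rfl⟩
    · -- nothing flipped
      have hid : mapFlip S ((a, true) :: v ++ w') = (a, true) :: v ++ w' := by
        apply mapFlip_eq_self
        intro t ht hS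
        simpa using (hC1 t ht hS).2
      rw [hid, (Opens.cons a hv hw).run]
      simp at hOD
      simp [hOD]
    · -- D = D' ++ [d]
      simp only [List.concat_eq_append] at hOD hDS hC1
      have hOD2 : O' ++ [a] = (O₁ ++ D') ++ [d] := by rw [hOD, List.append_assoc]
      obtain ⟨hO', hd⟩ := List.append_inj' hOD2 rfl
      have had : a = d := by simpa using hd
      subst had
      have haS : a ∈ S := hDS a (by simp)
      have hnd' : (a :: (opensites v ++ opensites w')).Nodup := by simpa using hnd
      have hanotin : a ∉ opensites v ++ opensites w' := (List.nodup_cons.mp hnd').1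
      have hndvw : (opensites v ++ opensites w').Nodup := (List.nodup_cons.mp hnd').2
      have hdisj : ∀ x, x ∈ opensites v → x ∈ opensites w' → False := by
        intro x h1 h2
        exact (List.disjoint_of_nodup_append hndvw) h1 h2
      -- mapFlip S v = v
      have hv_id : mapFlip S v = v := by
        apply mapFlip_eq_self
        rintro ⟨x, b⟩ ht hS
        have hmem : (x, b) ∈ (a, true) :: v ++ w' := by simp [ht]
        obtain ⟨htrue, htD⟩ := hC1 (x, b) hmem hS
        simp only at htrue
        subst htrue
        have hto : x ∈ opensites v := mem_opensites.mpr ht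
        rcases List.mem_append.mp htD with htD' | hta
        · have hx1 : x ∈ O' := by rw [hO']; exact List.mem_append.mpr (Or.inr htD')
          have hx2 : (x, true) ∈ w' := hw.mem _ hx1
          exact hdisj x hto (mem_opensites.mpr hx2)
        · have : x = a := by simpa using hta
          subst this
          exact hanotin (List.mem_append.mpr (Or.inl hto))
      have hC1' : ∀ t ∈ w', t.1 ∈ S → t.2 = true ∧ t.1 ∈ D' := by
        rintro ⟨x, b⟩ ht hS
        have hmem : (x, b) ∈ (a, true) :: v ++ w' := by simp [ht]
        obtain ⟨htrue, htD⟩ := hC1 (x, b) hmem hS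
        simp only at htrue
        subst htrue
        refine ⟨rfl, ?_⟩
        rcases List.mem_append.mp htD with htD' | hta
        · exact htD'
        · exfalso
          have hxa : x = a := by simpa using hta
          subst hxa
          exact hanotin (List.mem_append.mpr (Or.inr (mem_opensites.mpr ht)))
      have hndw' : (opensites w').Nodup := ((List.nodup_append.mp hndvw).2).1
      have hDS' : ∀ x ∈ D', x ∈ S := fun x hx => hDS x (by simp [hx])
      rw [show ((a, true) :: v ++ w') = (a, true) :: (v ++ w') from rfl]
      rw [mapFlip_cons]
      simp only [haS, if_pos]
      rw [mapFlip_append, hv_id]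
      show pairProcess ((a, false) :: (v ++ mapFlip S w')) [] cl = _
      rw [show pairProcess ((a, false) :: (v ++ mapFlip S w')) [] cl
            = pairProcess (v ++ mapFlip S w') [] (a :: cl) from rfl]
      rw [pairProcess_append, hv.run]
      rw [ih O₁ D' S hO' hDS' hC1' hndw' (a :: cl)]
      simp

end MLQaux
namespace MLQaux
variable {α : Type} [DecidableEq α]

lemma flip_closes_all {w : List (α × Bool)} {C : List α} (h : Closes w C) :
    ∀ (S : Finset α),
    (∀ x ∈ C, x ∈ S) →
    (∀ t ∈ w, t.1 ∈ S → t.2 = false ∧ t.1 ∈ C) →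
    (closesites w).Nodup →
    ∀ s cl, pairProcess (mapFlip S w) s cl = (C ++ s, cl) := by
  induction h with
  | bal hv =>
    intro S hCS hC1 hnd s cl
    have hid : mapFlip S _ = _ := mapFlip_eq_self (fun t ht hS => by simpa using (hC1 t ht hS).2)
    rw [hid, hv.run]
    simp
  | cons a hv hw ih =>
    rename_i v w' C'
    intro S hCS hC1 hnd s cl
    have hndv : (closesites v ++ (a :: closesites w')).Nodup := by simpa using hnd
    have hdisj := List.disjoint_of_nodup_append hndv
    have hnd2 : (a :: closesites w').Nodup := (List.nodup_append.mp hndv).2.1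
    have hanotin : a ∉ closesites w' := (List.nodup_cons.mp hnd2).1
    have hndw' : (closesites w').Nodup := (List.nodup_cons.mp hnd2).2
    have hv_id : mapFlip S v = v := by
      apply mapFlip_eq_self
      rintro ⟨x, b⟩ ht hS
      have hmem : (x, b) ∈ v ++ (a, false) :: w' := by simp [ht]
      obtain ⟨hfalse, hxC⟩ := hC1 (x, b) hmem hS
      simp only at hfalse
      subst hfalse
      have hxv : x ∈ closesites v := mem_closesites.mpr ht
      rcases List.mem_append.mp hxC with hxC' | hxa
      · have : (x, false) ∈ w' := hw.mem _ hxC'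
        exact hdisj hxv (by simp [mem_closesites.mpr this])
      · have : x = a := by simpa using hxa
        subst this
        exact hdisj hxv (by simp)
    have haS : a ∈ S := hCS a (by simp)
    have hC1' : ∀ t ∈ w', t.1 ∈ S → t.2 = false ∧ t.1 ∈ C' := by
      rintro ⟨x, b⟩ ht hS
      have hmem : (x, b) ∈ v ++ (a, false) :: w' := by simp [ht]
      obtain ⟨hfalse, hxC⟩ := hC1 (x, b) hmem hS
      simp only at hfalse
      subst hfalse
      refine ⟨rfl, ?_⟩
      rcases List.mem_append.mp hxC with hxC' | hxa
      · exact hxC'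
      · exfalso
        have : x = a := by simpa using hxa
        subst this
        exact hanotin (mem_closesites.mpr ht)
    have hCS' : ∀ x ∈ C', x ∈ S := fun x hx => hCS x (by simp [hx])
    rw [mapFlip_append, hv_id, pairProcess_append, hv.run]
    rw [mapFlip_cons]
    simp only [haS, if_pos]
    show pairProcess ((a, true) :: mapFlip S w') s cl = _
    rw [show pairProcess ((a, true) :: mapFlip S w') s cl
          = pairProcess (mapFlip S w') (a :: s) cl from rfl]
    rw [ih S hCS' hC1' hndw' (a :: s) cl]
    simp

lemma flip_closes {w : List (α × Bool)} {C : List α} (h : Closes w C) :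
    ∀ (D C₂ : List α) (S : Finset α), C = D ++ C₂ →
    (∀ x ∈ D, x ∈ S) →
    (∀ t ∈ w, t.1 ∈ S → t.2 = false ∧ t.1 ∈ D) →
    (closesites w).Nodup →
    ∀ cl, pairProcess (mapFlip S w) [] cl = (D, C₂ ++ cl) := by
  induction h with
  | bal hv =>
    intro D C₂ S hDC hDS hC1 hnd cl
    obtain ⟨rfl, rfl⟩ := List.append_eq_nil_iff.mp hDC.symm
    have hid : mapFlip S _ = _ := mapFlip_eq_self (fun t ht hS => by simpa using (hC1 t ht hS).2)
    rw [hid, hv.run]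
    simp
  | cons a hv hw ih =>
    rename_i v w' C'
    intro D C₂ S hDC hDS hC1 hnd cl
    rcases C₂.eq_nil_or_concat with rfl | ⟨C₂', c₂, rfl⟩
    · -- all remaining closes flipped: use flip_closes_all
      simp only [List.append_nil] at hDC
      have hall := flip_closes_all (Closes.cons a hv hw) S
        (by rw [← hDC] at hDS; exact hDS)
        (by rw [← hDC] at hC1; exact hC1) hnd [] cl
      rw [hall, hDC]
      simp
    · -- C₂ = C₂' ++ [c₂]
      simp only [List.concat_eq_append] at hDC hC1
      have hDC2 : C' ++ [a] = (D ++ C₂') ++ [c₂] := by rw [hDC, List.append_assoc]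
      obtain ⟨hC', hc⟩ := List.append_inj' hDC2 rfl
      have hac : a = c₂ := by simpa using hc
      subst hac
      have hndv : (closesites v ++ (a :: closesites w')).Nodup := by simpa using hnd
      have hdisj := List.disjoint_of_nodup_append hndv
      have hnd2 : (a :: closesites w').Nodup := (List.nodup_append.mp hndv).2.1
      have hanotin : a ∉ closesites w' := (List.nodup_cons.mp hnd2).1
      have hndw' : (closesites w').Nodup := (List.nodup_cons.mp hnd2).2
      have hanotS : a ∉ S := by
        intro haS
        have hmem : ((a : α), false) ∈ v ++ (a, false) :: w' := by simp
        obtain ⟨-, haD⟩ := hC1 (a, false) hmem haS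
        have : a ∈ C' := by rw [hC']; exact List.mem_append.mpr (Or.inl haD)
        exact hanotin (mem_closesites.mpr (hw.mem _ this))
      have hv_id : mapFlip S v = v := by
        apply mapFlip_eq_self
        rintro ⟨x, b⟩ ht hS
        have hmem : (x, b) ∈ v ++ (a, false) :: w' := by simp [ht]
        obtain ⟨hfalse, hxD⟩ := hC1 (x, b) hmem hS
        simp only at hfalse
        subst hfalse
        have hxv : x ∈ closesites v := mem_closesites.mpr ht
        have hxC' : x ∈ C' := by rw [hC']; exact List.mem_append.mpr (Or.inl hxD)
        exact hdisj hxv (by simp [mem_closesites.mpr (hw.mem _ hxC')])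
      have hC1' : ∀ t ∈ w', t.1 ∈ S → t.2 = false ∧ t.1 ∈ D := by
        intro t ht hS
        exact hC1 t (by simp [ht]) hS
      rw [mapFlip_append, hv_id, pairProcess_append, hv.run]
      rw [mapFlip_cons]
      simp only [hanotS, if_neg, if_false]
      show pairProcess ((a, false) :: mapFlip S w') [] cl = _
      rw [show pairProcess ((a, false) :: mapFlip S w') [] cl
            = pairProcess (mapFlip S w') [] (a :: cl) from rfl]
      rw [ih D C₂' S hC' hDS hC1' hndw' (a :: cl)]
      simp

end MLQaux
namespace MLQaux

lemma opensites_flatMap {α β : Type} (l : List β) (f : β → List (α × Bool)) :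
    opensites (l.flatMap f) = l.flatMap (fun j => opensites (f j)) := by
  induction l with
  | nil => rfl
  | cons x xs ih => simp [List.flatMap_cons, ih]

lemma closesites_flatMap {α β : Type} (l : List β) (f : β → List (α × Bool)) :
    closesites (l.flatMap f) = l.flatMap (fun j => closesites (f j)) := by
  induction l with
  | nil => rfl
  | cons x xs ih => simp [List.flatMap_cons, ih]

lemma flatMap_filter {β : Type} (l : List β) (p : β → Prop) [DecidablePred p] :
    (l.flatMap (fun j => if p j then [j] else [])) = l.filter (fun j => p j) := by
  induction l with
  | nil => rfl
  | cons x xs ih =>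
    by_cases h : p x <;> simp [List.flatMap_cons, ih, h, List.filter_cons]

lemma opensites_parTokens {n : ℕ} (A B : Finset (Fin n)) :
    opensites (parTokens A B) = (List.finRange n).filter (fun j => j ∈ B) := by
  rw [parTokens, opensites_flatMap, ← flatMap_filter (List.finRange n) (fun j => j ∈ B)]
  have h : ∀ j : Fin n,
      opensites ((if j ∈ B then [(j, true)] else []) ++ (if j ∈ A then [(j, false)] else []))
        = if j ∈ B then [j] else [] := by
    intro j; by_cases h1 : j ∈ B <;> by_cases h2 : j ∈ A <;> simp [h1, h2]
  simp only [h]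

lemma closesites_parTokens {n : ℕ} (A B : Finset (Fin n)) :
    closesites (parTokens A B) = (List.finRange n).filter (fun j => j ∈ A) := by
  rw [parTokens, closesites_flatMap, ← flatMap_filter (List.finRange n) (fun j => j ∈ A)]
  have h : ∀ j : Fin n,
      closesites ((if j ∈ B then [(j, true)] else []) ++ (if j ∈ A then [(j, false)] else []))
        = if j ∈ A then [j] else [] := by
    intro j; by_cases h1 : j ∈ B <;> by_cases h2 : j ∈ A <;> simp [h1, h2]
  simp only [h]

lemma opensites_parTokens_nodup {n : ℕ} (A B : Finset (Fin n)) :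
    (opensites (parTokens A B)).Nodup := by
  rw [opensites_parTokens]; exact (List.nodup_finRange n).filter _

lemma closesites_parTokens_nodup {n : ℕ} (A B : Finset (Fin n)) :
    (closesites (parTokens A B)).Nodup := by
  rw [closesites_parTokens]; exact (List.nodup_finRange n).filter _

lemma mem_parTokens_open {n : ℕ} {A B : Finset (Fin n)} {x : Fin n}
    (h : (x, true) ∈ parTokens A B) : x ∈ B := by
  have := mem_opensites.mpr h
  rw [opensites_parTokens] at this
  simpa using (List.mem_filter.mp this).2

lemma mem_parTokens_close {n : ℕ} {A B : Finset (Fin n)} {x : Fin n}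
    (h : (x, false) ∈ parTokens A B) : x ∈ A := by
  have := mem_closesites.mpr h
  rw [closesites_parTokens] at this
  simpa using (List.mem_filter.mp this).2

end MLQaux
namespace MLQaux

lemma pairProcess_mem₁ {α : Type} :
    ∀ (w : List (α × Bool)) (s cl : List α) (x : α),
      x ∈ (pairProcess w s cl).1 → (x, true) ∈ w ∨ x ∈ s := by
  intro w
  induction w with
  | nil => intro s cl x h; right; simpa [pairProcess] using h
  | cons t ts ih =>
    intro s cl x h
    obtain ⟨a, b⟩ := t
    cases b
    · cases s with
      | nil =>
        rcases ih [] (a :: cl) x (by simpa [pairProcess] using h) with h1 | h1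
        · exact Or.inl (by simp [h1])
        · simp at h1
      | cons y ys =>
        rcases ih ys cl x (by simpa [pairProcess] using h) with h1 | h1
        · exact Or.inl (by simp [h1])
        · exact Or.inr (by simp [h1])
    · rcases ih (a :: s) cl x (by simpa [pairProcess] using h) with h1 | h1
      · exact Or.inl (by simp [h1])
      · rcases List.mem_cons.mp h1 with rfl | h2
        · exact Or.inl (by simp)
        · exact Or.inr h2

lemma pairProcess_mem₂ {α : Type} :
    ∀ (w : List (α × Bool)) (s cl : List α) (x : α),
      x ∈ (pairProcess w s cl).2 → (x, false) ∈ w ∨ x ∈ cl := by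
  intro w
  induction w with
  | nil => intro s cl x h; right; simpa [pairProcess] using h
  | cons t ts ih =>
    intro s cl x h
    obtain ⟨a, b⟩ := t
    cases b
    · cases s with
      | nil =>
        rcases ih [] (a :: cl) x (by simpa [pairProcess] using h) with h1 | h1
        · exact Or.inl (by simp [h1])
        · rcases List.mem_cons.mp h1 with rfl | h2
          · exact Or.inl (by simp)
          · exact Or.inr h2
      | cons y ys =>
        rcases ih ys cl x (by simpa [pairProcess] using h) with h1 | h1
        · exact Or.inl (by simp [h1])
        · exact Or.inr h1
    · rcases ih (a :: s) cl x (by simpa [pairProcess] using h) with h1 | h1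
      · exact Or.inl (by simp [h1])
      · exact Or.inr h1

/-- A site in both `A` and `B` is immediately matched, hence absent from the linear
residue on both sides. -/
lemma parRes_not_mem_of_mem_inter {n : ℕ} {A B : Finset (Fin n)} {j : Fin n}
    (hA : j ∈ A) (hB : j ∈ B) :
    j ∉ (parRes A B).1 ∧ j ∉ (parRes A B).2 := by
  classical
  obtain ⟨P, Q, hPQ⟩ := List.append_of_mem (List.mem_finRange j)
  have hnd : (List.finRange n).Nodup := List.nodup_finRange n
  rw [hPQ] at hnd
  have hjP : j ∉ P := by
    intro h
    exact (List.disjoint_of_nodup_append hnd) h (by simp)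
  have hjQ : j ∉ Q := by
    have := (List.nodup_append.mp hnd).2.1
    exact (List.nodup_cons.mp this).1
  set seg : Fin n → List (Fin n × Bool) :=
    fun j => (if j ∈ B then [(j, true)] else []) ++ (if j ∈ A then [(j, false)] else []) with hseg
  have hw : parTokens A B = P.flatMap seg ++ ((j, true) :: (j, false) :: Q.flatMap seg) := by
    rw [parTokens, hPQ]
    simp [List.flatMap_append, List.flatMap_cons, hseg, hA, hB]
  have hrun : parRes A B = pairProcess (P.flatMap seg ++ Q.flatMap seg) [] [] := by
    rw [parRes, hw, pairProcess_append, pairProcess_append]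
    simp only [pairProcess]
  have hsite : ∀ (b : Bool), (j, b) ∉ P.flatMap seg ++ Q.flatMap seg := by
    intro b hmem
    rcases List.mem_append.mp hmem with h | h <;>
    · obtain ⟨i, hi, hji⟩ := List.mem_flatMap.mp h
      have : j = i := by
        rcases List.mem_append.mp hji with h2 | h2 <;>
          (split at h2 <;> simp_all)
      subst this
      first | exact hjP hi | exact hjQ hi
  constructor
  · intro h
    rw [hrun] at h
    rcases pairProcess_mem₁ _ [] [] j h with h1 | h1
    · exact hsite true h1
    · simp at h1
  · intro h
    rw [hrun] at h
    rcases pairProcess_mem₂ _ [] [] j h with h1 | h1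
    · exact hsite false h1
    · simp at h1

end MLQaux
namespace MLQaux

lemma parTokens_flip_open {n : ℕ} (A B S : Finset (Fin n))
    (hSB : ∀ x ∈ S, x ∈ B) (hSA : ∀ x ∈ S, x ∉ A) :
    parTokens (A ∪ S) (B \ S) = mapFlip S (parTokens A B) := by
  rw [parTokens, parTokens, mapFlip, List.map_flatMap]
  apply List.flatMap_congr
  intro j hj
  by_cases hS : j ∈ S
  · have hBj : j ∈ B := hSB j hS
    have hAj : j ∉ A := hSA j hS
    simp [hS, hBj, hAj]
  · by_cases hBj : j ∈ B <;> by_cases hAj : j ∈ A <;>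
      simp [hS, hBj, hAj, Finset.mem_union, Finset.mem_sdiff]

lemma parTokens_flip_close {n : ℕ} (A B S : Finset (Fin n))
    (hSA : ∀ x ∈ S, x ∈ A) (hSB : ∀ x ∈ S, x ∉ B) :
    parTokens (A \ S) (B ∪ S) = mapFlip S (parTokens A B) := by
  rw [parTokens, parTokens, mapFlip, List.map_flatMap]
  apply List.flatMap_congr
  intro j hj
  by_cases hS : j ∈ S
  · have hAj : j ∈ A := hSA j hS
    have hBj : j ∉ B := hSB j hS
    simp [hS, hAj, hBj]
  · by_cases hBj : j ∈ B <;> by_cases hAj : j ∈ A <;>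
      simp [hS, hBj, hAj, Finset.mem_union, Finset.mem_sdiff]

end MLQaux
namespace MLQaux

lemma sigmaPair_inv {n : ℕ} (A B : Finset (Fin n)) :
    sigmaPair (sigmaPair A B).1 (sigmaPair A B).2 = (A, B) := by
  classical
  obtain ⟨w₁, w₂, C, O, hsplit, hC, hO⟩ := exists_decomp (parTokens A B)
  have hrun : parRes A B = (O, C) := by rw [parRes, hsplit]; exact decomp_run hC hO
  have hOB : ∀ x ∈ O, x ∈ B := by
    intro x hx
    exact mem_parTokens_open (by rw [hsplit]; exact List.mem_append.mpr (Or.inr (hO.mem x hx)))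
  have hCA : ∀ x ∈ C, x ∈ A := by
    intro x hx
    exact mem_parTokens_close (by rw [hsplit]; exact List.mem_append.mpr (Or.inl (hC.mem x hx)))
  have hOA : ∀ x ∈ O, x ∉ A := by
    intro x hx hxA
    have := (parRes_not_mem_of_mem_inter hxA (hOB x hx)).1
    rw [hrun] at this
    exact this hx
  have hCB : ∀ x ∈ C, x ∉ B := by
    intro x hx hxB
    have := (parRes_not_mem_of_mem_inter (hCA x hx) hxB).2
    rw [hrun] at this
    exact this hx
  have hndo := opensites_parTokens_nodup A B
  have hndc := closesites_parTokens_nodup A B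
  rw [hsplit] at hndo hndc
  rw [opensites_append] at hndo
  rw [closesites_append] at hndc
  rcases le_or_gt C.length O.length with hc | hc
  · -- more (or equal) opens: flip the earliest surplus opens
    set D : List (Fin n) := O.drop C.length with hD
    set S : Finset (Fin n) := D.toFinset with hS
    have hDO : ∀ x ∈ D, x ∈ O := fun x hx => List.drop_subset _ _ hx
    have hSB : ∀ x ∈ S, x ∈ B := fun x hx => hOB x (hDO x (List.mem_toFinset.mp hx))
    have hSA : ∀ x ∈ S, x ∉ A := fun x hx => hOA x (hDO x (List.mem_toFinset.mp hx))
    have hUO : unmatchedOpen A B = S := by rw [unmatchedOpen, hrun]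
    have hUC : unmatchedClose A B = ∅ := by
      rw [unmatchedClose, hrun]
      simp [Nat.sub_eq_zero_of_le hc]
    have h1 : (sigmaPair A B).1 = A ∪ S := by simp [sigmaPair, hUO, hUC]
    have h2 : (sigmaPair A B).2 = B \ S := by simp [sigmaPair, hUO, hUC]
    have hC1 : ∀ t ∈ parTokens A B, t.1 ∈ S → t.2 = true ∧ t.1 ∈ D := by
      rintro ⟨x, b⟩ ht hx
      cases b
      · exact absurd (mem_parTokens_close ht) (hSA x hx)
      · exact ⟨rfl, List.mem_toFinset.mp hx⟩
    have hw1_id : mapFlip S w₁ = w₁ := by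
      apply mapFlip_eq_self
      rintro ⟨x, b⟩ ht hx
      obtain ⟨htrue, htD⟩ := hC1 (x, b) (by rw [hsplit]; exact List.mem_append.mpr (Or.inl ht)) hx
      simp only at htrue
      subst htrue
      have h1' : x ∈ opensites w₁ := mem_opensites.mpr ht
      have h2' : x ∈ opensites w₂ := mem_opensites.mpr (hO.mem x (hDO x htD))
      exact (List.disjoint_of_nodup_append hndo) h1' h2'
    have hrun' : parRes (A ∪ S) (B \ S) = (O.take C.length, D ++ C) := by
      rw [parRes, parTokens_flip_open A B S hSB hSA, hsplit, mapFlip_append, hw1_id,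
        pairProcess_append, hC.run]
      simp only [List.append_nil]
      exact flip_opens hO (O.take C.length) D S (List.take_append_drop _ _).symm
        (fun x hx => List.mem_toFinset.mpr hx)
        (fun t ht hx => hC1 t (by rw [hsplit]; exact List.mem_append.mpr (Or.inr ht)) hx)
        ((List.nodup_append.mp hndo).2.1) C
    have hlenD : D.length = O.length - C.length := by simp [hD]
    have hlenDC : (D ++ C).length = O.length := by
      simp [hlenD, Nat.sub_add_cancel hc]
    have hlentake : (O.take C.length).length = C.length := by
      simp [Nat.min_eq_left hc]
    have hUO' : unmatchedOpen (A ∪ S) (B \ S) = ∅ := by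
      rw [unmatchedOpen, hrun']
      simp only [hlenDC]
      rw [List.drop_eq_nil_of_le (by rw [hlentake]; exact hc)]
      rfl
    have hUC' : unmatchedClose (A ∪ S) (B \ S) = S := by
      rw [unmatchedClose, hrun']
      simp only [hlenDC, hlentake]
      have : O.length - C.length = D.length := hlenD.symm
      rw [this, List.take_left]
    have hfst : ((A ∪ S) \ S) ∪ (∅ : Finset (Fin n)) = A := by
      rw [Finset.union_empty]
      ext x
      simp only [Finset.mem_sdiff, Finset.mem_union]
      constructor
      · rintro ⟨h | h, hn⟩
        · exact h
        · exact absurd h hn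
      · intro hx
        exact ⟨Or.inl hx, fun hS' => hSA x hS' hx⟩
    have hsnd : ((B \ S) \ (∅ : Finset (Fin n))) ∪ S = B := by
      rw [Finset.sdiff_empty]
      exact Finset.sdiff_union_of_subset (fun x hx => hSB x hx)
    rw [h1, h2]
    rw [show sigmaPair (A ∪ S) (B \ S)
        = (((A ∪ S) \ unmatchedClose (A ∪ S) (B \ S)) ∪ unmatchedOpen (A ∪ S) (B \ S),
           ((B \ S) \ unmatchedOpen (A ∪ S) (B \ S)) ∪ unmatchedClose (A ∪ S) (B \ S)) from rfl]
    rw [hUO', hUC']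
    exact Prod.ext (by simpa using hfst) (by simpa using hsnd)
  · -- more closes: flip the latest surplus closes
    set D : List (Fin n) := C.take (C.length - O.length) with hD
    set C₂ : List (Fin n) := C.drop (C.length - O.length) with hC₂
    set S : Finset (Fin n) := D.toFinset with hS
    have hDC : ∀ x ∈ D, x ∈ C := fun x hx => List.take_subset _ _ hx
    have hSA : ∀ x ∈ S, x ∈ A := fun x hx => hCA x (hDC x (List.mem_toFinset.mp hx))
    have hSB : ∀ x ∈ S, x ∉ B := fun x hx => hCB x (hDC x (List.mem_toFinset.mp hx))
    have hUO : unmatchedOpen A B = ∅ := by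
      rw [unmatchedOpen, hrun]
      simp only
      rw [List.drop_eq_nil_of_le (le_of_lt hc)]
      rfl
    have hUC : unmatchedClose A B = S := by rw [unmatchedClose, hrun]
    have h1 : (sigmaPair A B).1 = A \ S := by simp [sigmaPair, hUO, hUC]
    have h2 : (sigmaPair A B).2 = B ∪ S := by simp [sigmaPair, hUO, hUC]
    have hC1 : ∀ t ∈ parTokens A B, t.1 ∈ S → t.2 = false ∧ t.1 ∈ D := by
      rintro ⟨x, b⟩ ht hx
      cases b
      · exact ⟨rfl, List.mem_toFinset.mp hx⟩
      · exact absurd (mem_parTokens_open ht) (hSB x hx)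
    have hw2_id : mapFlip S w₂ = w₂ := by
      apply mapFlip_eq_self
      rintro ⟨x, b⟩ ht hx
      obtain ⟨hfalse, htD⟩ := hC1 (x, b) (by rw [hsplit]; exact List.mem_append.mpr (Or.inr ht)) hx
      simp only at hfalse
      subst hfalse
      have h1' : x ∈ closesites w₂ := mem_closesites.mpr ht
      have h2' : x ∈ closesites w₁ := mem_closesites.mpr (hC.mem x (hDC x htD))
      exact (List.disjoint_of_nodup_append hndc) h2' h1'
    have hrun' : parRes (A \ S) (B ∪ S) = (O ++ D, C₂) := by
      rw [parRes, parTokens_flip_close A B S hSA hSB, hsplit, mapFlip_append, hw2_id,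
        pairProcess_append]
      rw [flip_closes hC D C₂ S (List.take_append_drop _ _).symm
        (fun x hx => List.mem_toFinset.mpr hx)
        (fun t ht hx => hC1 t (by rw [hsplit]; exact List.mem_append.mpr (Or.inl ht)) hx)
        ((List.nodup_append.mp hndc).1) []]
      simp only [List.append_nil]
      exact hO.run D C₂
    have hlenD : D.length = C.length - O.length := by
      simp [hD, Nat.min_eq_left (Nat.sub_le _ _)]
    have hlenC₂ : C₂.length = O.length := by
      simp [hC₂, Nat.sub_sub_self (le_of_lt hc)]
    have hUO' : unmatchedOpen (A \ S) (B ∪ S) = S := by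
      rw [unmatchedOpen, hrun']
      simp only [hlenC₂]
      rw [List.drop_left]
    have hUC' : unmatchedClose (A \ S) (B ∪ S) = ∅ := by
      rw [unmatchedClose, hrun']
      simp only [hlenC₂, List.length_append, hlenD]
      rw [Nat.sub_eq_zero_of_le (by omega)]
      rfl
    have hfst : ((A \ S) \ (∅ : Finset (Fin n))) ∪ S = A := by
      rw [Finset.sdiff_empty]
      exact Finset.sdiff_union_of_subset (fun x hx => hSA x hx)
    have hsnd : ((B ∪ S) \ S) ∪ (∅ : Finset (Fin n)) = B := by
      rw [Finset.union_empty]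
      ext x
      simp only [Finset.mem_sdiff, Finset.mem_union]
      constructor
      · rintro ⟨h | h, hn⟩
        · exact h
        · exact absurd h hn
      · intro hx
        exact ⟨Or.inl hx, fun hS' => hSB x hS' hx⟩
    rw [h1, h2]
    rw [show sigmaPair (A \ S) (B ∪ S)
        = (((A \ S) \ unmatchedClose (A \ S) (B ∪ S)) ∪ unmatchedOpen (A \ S) (B ∪ S),
           ((B ∪ S) \ unmatchedOpen (A \ S) (B ∪ S)) ∪ unmatchedClose (A \ S) (B ∪ S)) from rfl]
    rw [hUO', hUC']
    exact Prod.ext (by simpa using hfst) (by simpa using hsnd)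

end MLQaux

/-- the row-swapping operation `σ_i` on fermionic multiline queues with
`k ≥ 2` rows is an involution: `σ_i (σ_i Q) = Q` for all `1 ≤ i < k`
(here rows are indexed by `0, …, k-1` and `σ_i` acts on rows `i` and `i+1`). -/
theorem sigmaRow_involutive (n k : ℕ) (hk : 2 ≤ k) (Q : ℕ → Finset (Fin n))
    (i : ℕ) (hi : i + 1 < k) :
    sigmaRow i (sigmaRow i Q) = Q := by
  have hP := MLQaux.sigmaPair_inv (Q i) (Q (i + 1))
  have hne : i + 1 ≠ i := Nat.succ_ne_self i
  have hQi : sigmaRow i Q i = (sigmaPair (Q i) (Q (i + 1))).1 := by simp [sigmaRow]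
  have hQi1 : sigmaRow i Q (i + 1) = (sigmaPair (Q i) (Q (i + 1))).2 := by
    simp [sigmaRow, hne]
  funext j
  show (if j = i then (sigmaPair (sigmaRow i Q i) (sigmaRow i Q (i + 1))).1
    else if j = i + 1 then (sigmaPair (sigmaRow i Q i) (sigmaRow i Q (i + 1))).2
    else sigmaRow i Q j) = Q j
  rw [hQi, hQi1, hP]
  by_cases h1 : j = i
  · subst h1; simp
  · by_cases h2 : j = i + 1
    · subst h2; simp [hne]
    · simp [sigmaRow, h1, h2]
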